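/- A virtually solvable group cannot act faithfully and highly transitively on an infinite set X. More precisely, if G acts faithfully and m-transitively on an infinite set for all m, then G contains no finite-index normal solvable subgroup other than allowed by triviality — i.e., G is not virtually solvable. -/

import Mathlib

/-- An embedding of `Fin 2` from two distinct points. -/
private def emb2 {X : Type*} {a b : X} (h : a ≠ b) : Fin 2 ↪ X :=
  ⟨![a, b], by
    intro i j hij
    fin_cases i <;> fin_cases j <;> simp_all⟩

@[simp] private lemma emb2_zero {X : Type*} {a b : X} (h : a ≠ b) : emb2 h 0 = a := rfl
@[simp] private lemma emb2_one {X : Type*} {a b : X} (h : a ≠ b) : emb2 h 1 = b := rfl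

/-- An embedding of `Fin 4` from four distinct points. -/
private def emb4 {X : Type*} {a b c d : X} (hab : a ≠ b) (hac : a ≠ c) (had : a ≠ d)
    (hbc : b ≠ c) (hbd : b ≠ d) (hcd : c ≠ d) : Fin 4 ↪ X :=
  ⟨![a, b, c, d], by
    intro i j hij
    fin_cases i <;> fin_cases j <;> simp_all⟩

@[simp] private lemma emb4_zero {X : Type*} {a b c d : X} (hab : a ≠ b) (hac : a ≠ c)
    (had : a ≠ d) (hbc : b ≠ c) (hbd : b ≠ d) (hcd : c ≠ d) :
    emb4 hab hac had hbc hbd hcd 0 = a := rfl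
@[simp] private lemma emb4_one {X : Type*} {a b c d : X} (hab : a ≠ b) (hac : a ≠ c)
    (had : a ≠ d) (hbc : b ≠ c) (hbd : b ≠ d) (hcd : c ≠ d) :
    emb4 hab hac had hbc hbd hcd 1 = b := rfl
@[simp] private lemma emb4_two {X : Type*} {a b c d : X} (hab : a ≠ b) (hac : a ≠ c)
    (had : a ≠ d) (hbc : b ≠ c) (hbd : b ≠ d) (hcd : c ≠ d) :
    emb4 hab hac had hbc hbd hcd 2 = c := rfl
@[simp] private lemma emb4_three {X : Type*} {a b c d : X} (hab : a ≠ b) (hac : a ≠ c)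
    (had : a ≠ d) (hbc : b ≠ c) (hbd : b ≠ d) (hcd : c ≠ d) :
    emb4 hab hac had hbc hbd hcd 3 = d := rfl

/-- Nontrivial elements of a normal abelian subgroup of a 2-transitive group act
without fixed points. -/
private lemma fpf {G X : Type*} [Group G] [MulAction G X]
    (hht : ∀ (m : ℕ) (f g : Fin m ↪ X), ∃ γ : G, ∀ i : Fin m, γ • f i = g i)
    {A : Subgroup G} (hN : A.Normal) (hcomm : ∀ a ∈ A, ∀ b ∈ A, a * b = b * a)
    {c : G} (hc : c ∈ A) {p s : X} (hp : c • p = p) (hs : c • s ≠ s) : False := by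
  set t := c • s with ht
  have hps : p ≠ s := by rintro rfl; exact hs hp
  have hpt : p ≠ t := by
    rintro rfl
    exact hps (smul_left_cancel c (hp.trans ht))
  have hst : s ≠ t := fun h => hs h.symm
  obtain ⟨g, hg⟩ := hht 2 (emb2 hst) (emb2 hps.symm)
  have hg0 : g • s = s := by simpa using hg 0
  have hg1 : g • t = p := by simpa using hg 1
  set b := g * c * g⁻¹ with hb
  have hbA : b ∈ A := hN.conj_mem c hc g
  have hbs : b • s = p := by
    have h' : g⁻¹ • s = s := inv_smul_eq_iff.mpr hg0.symm
    rw [hb, mul_smul, mul_smul, h', ← ht, hg1]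
  have h1 : (c * b) • s = p := by rw [mul_smul, hbs, hp]
  have h2 : (b * c) • s = b • t := by rw [mul_smul, ← ht]
  have : b • t = p := by rw [← h2, ← hcomm c hc b hbA, h1]
  exact hst (smul_left_cancel b (hbs.trans this.symm))

theorem no_abelian_normal {G X : Type*} [Group G] [MulAction G X] [FaithfulSMul G X]
    [Infinite X]
    (hht : ∀ (m : ℕ) (f g : Fin m ↪ X), ∃ γ : G, ∀ i : Fin m, γ • f i = g i)
    {A : Subgroup G} (hN : A.Normal) (hcomm : ∀ a ∈ A, ∀ b ∈ A, a * b = b * a) :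
    A = ⊥ := by
  classical
  by_contra hA
  obtain ⟨⟨a, haA⟩, ha1'⟩ := Subgroup.ne_bot_iff_exists_ne_one.mp hA
  have ha1 : a ≠ 1 := by simpa [Subtype.ext_iff] using ha1'
  -- a has a moved point
  have : ¬ ∀ x : X, a • x = x := by
    intro h
    exact ha1 (FaithfulSMul.eq_of_smul_eq_smul (fun x => by rw [h x, one_smul]))
  push_neg at this
  obtain ⟨x, hx⟩ := this
  set y := a • x with hy
  have hxy : x ≠ y := fun h => hx h.symm
  -- pick q outside {x, y, a⁻¹ • x}
  obtain ⟨q, hq⟩ := ({x, y, a⁻¹ • x} : Finset X).exists_notMem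
  simp only [Finset.mem_insert, Finset.mem_singleton, not_or] at hq
  obtain ⟨hqx, hqy, hqa⟩ := hq
  set r := a • q with hr
  have hqr : q ≠ r := by
    intro h
    exact fpf hht hN hcomm haA h.symm hx
  have hrx : r ≠ x := by
    intro h
    exact hqa (by rw [← h, hr]; simp)
  have hry : r ≠ y := by
    intro h
    exact hqx (smul_left_cancel a (by rw [← hr, ← hy, h]))
  -- pick z outside {x, y, q, r}
  obtain ⟨z, hz⟩ := ({x, y, q, r} : Finset X).exists_notMem
  simp only [Finset.mem_insert, Finset.mem_singleton, not_or] at hz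
  obtain ⟨hzx, hzy, hzq, hzr⟩ := hz
  obtain ⟨g, hg⟩ := hht 4
    (emb4 hxy (Ne.symm hqx) (Ne.symm hrx) (Ne.symm hqy) (Ne.symm hry) hqr)
    (emb4 (Ne.symm hzx) (Ne.symm hqx) (Ne.symm hrx) hzq hzr hqr)
  have hg0 : g • x = x := by simpa using hg 0
  have hg1 : g • y = z := by simpa using hg 1
  have hg2 : g • q = q := by simpa using hg 2
  have hg3 : g • r = r := by simpa using hg 3
  set b := g * a * g⁻¹ with hb
  have hbA : b ∈ A := hN.conj_mem a haA g
  have hbx : b • x = z := by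
    have h' : g⁻¹ • x = x := inv_smul_eq_iff.mpr hg0.symm
    simp [hb, mul_smul, h', ← hy, hg1]
  have hbq : b • q = r := by
    have h' : g⁻¹ • q = q := inv_smul_eq_iff.mpr hg2.symm
    simp [hb, mul_smul, h', ← hr, hg3]
  set c := a⁻¹ * b with hc
  have hcA : c ∈ A := A.mul_mem (A.inv_mem haA) hbA
  have hcq : c • q = q := by
    rw [hc, mul_smul, hbq, hr]; simp
  have hcx : c • x ≠ x := by
    intro h
    rw [hc, mul_smul, hbx] at h
    have : z = y := by
      have := congrArg (a • ·) h
      simpa [← hy] using this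
    exact hzy this
  exact fpf hht hN hcomm hcA hcq hcx

/-- A group acting faithfully and `m`-transitively for every `m` on an infinite set
is not virtually solvable: it has no solvable subgroup of finite index. -/
theorem stmt_19 {G X : Type*} [Group G] [MulAction G X] [FaithfulSMul G X] [Infinite X]
    (hht : ∀ (m : ℕ) (f g : Fin m ↪ X), ∃ γ : G, ∀ i : Fin m, γ • f i = g i) :
    ¬ ∃ S : Subgroup G, S.index ≠ 0 ∧ IsSolvable S := by
  rintro ⟨S, hSi, hSs⟩
  haveI : S.FiniteIndex := ⟨hSi⟩
  set N := S.normalCore with hNdef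
  haveI hNn : N.Normal := S.normalCore_normal
  haveI : N.FiniteIndex := S.finiteIndex_normalCore
  haveI : IsSolvable N :=
    by haveI : Group.IsSolvable S := hSs; exact solvable_of_solvable_injective (Subgroup.inclusion_injective S.normalCore_le)
  -- the "derived series in G" of N
  set P : ℕ → Subgroup G := fun n => (derivedSeries N n).map N.subtype with hP
  have hP0 : P 0 = N := by
    simp [hP, derivedSeries_zero, ← MonoidHom.range_eq_map, N.range_subtype]
  have hPs : ∀ n, P (n + 1) = ⁅P n, P n⁆ := by
    intro n
    simp [hP, derivedSeries_succ, Subgroup.map_commutator]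
  have hPnormal : ∀ n, (P n).Normal := by
    intro n
    induction n with
    | zero => rw [hP0]; exact hNn
    | succ n ih => rw [hPs n]; exact @Subgroup.commutator_normal G _ _ _ ih ih
  obtain ⟨n, hn⟩ := hSs.solvable
  -- N is solvable as an abstract group
  obtain ⟨m, hm⟩ := (this : IsSolvable N).solvable
  have hPm : P m = ⊥ := by simp only [hP, hm, Subgroup.map_bot]
  -- N is nontrivial, else G is finite
  have hNne : N ≠ ⊥ := by
    intro hNb
    have : Nat.card G ≠ 0 := by
      have := hNb ▸ (inferInstance : N.FiniteIndex).index_ne_zero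
      rwa [Subgroup.index_bot] at this
    haveI : Finite G := (Nat.card_ne_zero.mp this).2
    obtain ⟨x0⟩ := (inferInstance : Infinite X).nonempty
    have hsurj : Function.Surjective (fun γ : G => γ • x0) := by
      intro y
      by_cases hxy : x0 = y
      · exact ⟨1, by simp [← hxy]⟩
      · obtain ⟨γ, hγ⟩ := hht 1 ⟨![x0], fun i j _ => Subsingleton.elim i j⟩
          ⟨![y], fun i j _ => Subsingleton.elim i j⟩
        exact ⟨γ, hγ 0⟩
    exact (Finite.of_surjective _ hsurj).not_infinite (inferInstance : Infinite X)
  -- find the last nontrivial term of the series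
  have key : ∀ k, P k = ⊥ → ∃ j, P j ≠ ⊥ ∧ P (j + 1) = ⊥ := by
    intro k
    induction k with
    | zero => intro h; exact absurd (hP0 ▸ h) hNne
    | succ k ih =>
      intro h
      by_cases hk : P k = ⊥
      · exact ih hk
      · exact ⟨k, hk, h⟩
  obtain ⟨j, hjne, hjbot⟩ := key m hPm
  -- P j is a nontrivial normal abelian subgroup: contradiction
  have hcomm : ∀ a ∈ P j, ∀ b ∈ P j, a * b = b * a := by
    intro a ha b hb
    open scoped commutatorElement in have : ⁅a, b⁆ ∈ ⁅P j, P j⁆ := Subgroup.commutator_mem_commutator ha hb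
    rw [← hPs j, hjbot, Subgroup.mem_bot] at this
    exact commutatorElement_eq_one_iff_mul_comm.mp this
  exact hjne (no_abelian_normal hht (hPnormal j) hcomm)
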